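/- Let g be a symmetric 4×4 complex matrix with det g ≠ 0, and write g = gR + i·gI. Then the area metric of g is real (Im(g a c · g d b − g a d · g c b) = 0 for all a, b, c, d) if and only if the cross-reality condition holds: gR a c · gI d b = gR a d · gI c b for all indices a, b, c, d. -/
import Mathlib

/-- For a symmetric 4×4 complex matrix `g` with nonzero determinant,
writing `gR a b = (g a b).re` and `gI a b = (g a b).im`, the area metric of `g`
is real iff the cross-reality condition `gR a c * gI d b = gR a d * gI c b`
holds for all indices. -/
theorem area_metric_real_iff_cross_reality
    (g : Matrix (Fin 4) (Fin 4) ℂ) (hsymm : g.IsSymm) (hdet : g.det ≠ 0) :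
    (∀ a b c d : Fin 4, (g a c * g d b - g a d * g c b).im = 0) ↔
      (∀ a b c d : Fin 4,
        (g a c).re * (g d b).im = (g a d).re * (g c b).im) := by
  have hs : ∀ p q : Fin 4, g p q = g q p := by
    intro p q
    have := congrFun (congrFun hsymm q) p
    simpa [Matrix.transpose_apply] using this
  constructor
  · -- hard direction
    intro h
    have hgu : IsUnit g.det := isUnit_iff_ne_zero.mpr hdet
    set C : Matrix (Fin 4) (Fin 4) ℂ := g.map (starRingEnd ℂ) with hCdef
    have hCapp : ∀ p q, C p q = (starRingEnd ℂ) (g p q) := fun p q => rfl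
    have hCs : ∀ p q, C p q = C q p := fun p q => by
      rw [hCapp, hCapp, hs p q]
    have hH : ∀ i j k l, C i j * C k l - C i k * C j l
        = g i j * g k l - g i k * g j l := by
      intro i j k l
      have h0 := h i l j k
      have h1 : (starRingEnd ℂ) (g i j * g k l - g i k * g j l)
          = g i j * g k l - g i k * g j l := Complex.conj_eq_iff_im.mpr h0
      calc C i j * C k l - C i k * C j l
          = (starRingEnd ℂ) (g i j * g k l - g i k * g j l) := by
            simp [hCapp, map_sub, map_mul]
        _ = g i j * g k l - g i k * g j l := h1
    have hg1 : g * g⁻¹ = 1 := Matrix.mul_nonsing_inv g hgu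
    have hg2 : g⁻¹ * g = 1 := Matrix.nonsing_inv_mul g hgu
    have hCdetu : IsUnit C.det := by
      have hmap : (starRingEnd ℂ) g.det = C.det := RingHom.map_det _ g
      rw [isUnit_iff_ne_zero, ← hmap]
      simpa using hdet
    have hC1 : C * C⁻¹ = 1 := Matrix.mul_nonsing_inv C hCdetu
    have hC2 : C⁻¹ * C = 1 := Matrix.nonsing_inv_mul C hCdetu
    have hCinv : C⁻¹ = g⁻¹.map (starRingEnd ℂ) := by
      apply Matrix.inv_eq_right_inv
      have h2 : (g * g⁻¹).map (starRingEnd ℂ) = (1 : Matrix (Fin 4) (Fin 4) ℂ) := by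
        rw [hg1]
        ext i j
        simp [Matrix.map_apply, Matrix.one_apply, apply_ite]
      calc C * g⁻¹.map (starRingEnd ℂ) = (g * g⁻¹).map (starRingEnd ℂ) := by
            rw [Matrix.map_mul]
        _ = 1 := h2
    set τ : ℂ := (C * g⁻¹).trace with hτdef
    have inner1 : ∀ x : Fin 4, (∑ y, g x y * g⁻¹ y x) = 1 := fun x => by
      rw [← Matrix.mul_apply, hg1, Matrix.one_apply_eq]
    have inner2 : ∀ y j : Fin 4, (∑ x, g⁻¹ y x * g x j)
        = (1 : Matrix (Fin 4) (Fin 4) ℂ) y j := fun y j => by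
      rw [← Matrix.mul_apply, hg2]
    have Emat : (3 : ℂ) • g = τ • C - C * g⁻¹ * C := by
      ext i j
      rw [hτdef]
      simp only [Matrix.smul_apply, Matrix.sub_apply, smul_eq_mul,
        Matrix.mul_apply, Matrix.trace, Matrix.diag]
      have step1 : (∑ x, ∑ y, C x y * g⁻¹ y x) * C i j
          - (∑ x, (∑ y, C i y * g⁻¹ y x) * C x j)
          = ∑ x, ∑ y, (C x y * g⁻¹ y x * C i j - C i y * g⁻¹ y x * C x j) := by
        rw [Finset.sum_mul, ← Finset.sum_sub_distrib]
        refine Finset.sum_congr rfl fun x _ => ?_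
        rw [Finset.sum_mul, Finset.sum_mul, ← Finset.sum_sub_distrib]
      have step2 : ∀ x y : Fin 4,
          C x y * g⁻¹ y x * C i j - C i y * g⁻¹ y x * C x j
          = g⁻¹ y x * (g i j * g x y) - g⁻¹ y x * (g i y * g x j) := by
        intro x y
        have e := hH i j y x
        rw [hCs y x, hCs j x, hs y x, hs j x] at e
        linear_combination g⁻¹ y x * e
      have P1 : ∀ x : Fin 4, (∑ y, g⁻¹ y x * (g i j * g x y)) = g i j := by
        intro x
        have e3 : (∑ y, g⁻¹ y x * (g i j * g x y))
            = g i j * ∑ y, g x y * g⁻¹ y x := by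
          rw [Finset.mul_sum]
          exact Finset.sum_congr rfl fun y _ => by ring
        rw [e3, inner1 x, mul_one]
      have P2 : (∑ x, ∑ y, g⁻¹ y x * (g i y * g x j)) = g i j := by
        rw [Finset.sum_comm]
        have e1 : ∀ y : Fin 4, (∑ x, g⁻¹ y x * (g i y * g x j))
            = g i y * (1 : Matrix (Fin 4) (Fin 4) ℂ) y j := by
          intro y
          have e3 : (∑ x, g⁻¹ y x * (g i y * g x j))
              = g i y * ∑ x, g⁻¹ y x * g x j := by
            rw [Finset.mul_sum]
            exact Finset.sum_congr rfl fun x _ => by ring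
          rw [e3, inner2 y j]
        rw [Finset.sum_congr rfl fun y _ => e1 y, ← Matrix.mul_apply, mul_one]
      have main : (∑ x, ∑ y, C x y * g⁻¹ y x) * C i j
          - (∑ x, (∑ y, C i y * g⁻¹ y x) * C x j) = 3 * g i j := by
        rw [step1]
        calc ∑ x, ∑ y, (C x y * g⁻¹ y x * C i j - C i y * g⁻¹ y x * C x j)
            = ∑ x, ∑ y, (g⁻¹ y x * (g i j * g x y) - g⁻¹ y x * (g i y * g x j)) :=
              Finset.sum_congr rfl fun x _ => Finset.sum_congr rfl fun y _ => step2 x y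
          _ = (∑ x, ∑ y, g⁻¹ y x * (g i j * g x y))
              - ∑ x, ∑ y, g⁻¹ y x * (g i y * g x j) := by
              rw [← Finset.sum_sub_distrib]
              exact Finset.sum_congr rfl fun x _ => by rw [← Finset.sum_sub_distrib]
          _ = (∑ x : Fin 4, g i j) - g i j := by
              rw [P2]
              exact congrArg (· - g i j) (Finset.sum_congr rfl fun x _ => P1 x)
          _ = 3 * g i j := by
              simp only [Finset.sum_const, Finset.card_univ, Fintype.card_fin,
                nsmul_eq_mul, Nat.cast_ofNat]
              ring
      linear_combination main.symm
    have Eq1 : (3 : ℂ) • (1 : Matrix (Fin 4) (Fin 4) ℂ)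
        = τ • (C * g⁻¹) - (C * g⁻¹) * (C * g⁻¹) := by
      calc (3:ℂ) • (1 : Matrix (Fin 4) (Fin 4) ℂ) = (3:ℂ) • (g * g⁻¹) := by rw [hg1]
        _ = ((3:ℂ) • g) * g⁻¹ := by rw [Matrix.smul_mul]
        _ = (τ • C - C * g⁻¹ * C) * g⁻¹ := by rw [Emat]
        _ = τ • (C * g⁻¹) - (C * g⁻¹) * (C * g⁻¹) := by
            rw [Matrix.sub_mul, Matrix.smul_mul, mul_assoc (C * g⁻¹) C g⁻¹]
    have hBB1 : (C * g⁻¹) * (g * C⁻¹) = 1 := by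
      rw [mul_assoc C g⁻¹ (g * C⁻¹), ← mul_assoc g⁻¹ g C⁻¹, hg2, one_mul, hC1]
    have hBB2 : (g * C⁻¹) * (C * g⁻¹) = 1 := by
      rw [mul_assoc g C⁻¹ (C * g⁻¹), ← mul_assoc C⁻¹ C g⁻¹, hC2, one_mul, hg1]
    have hmapB' : ∀ p q, (starRingEnd ℂ) ((C * g⁻¹) p q) = (g * C⁻¹) p q := by
      intro p q
      have hBmap : (C * g⁻¹).map (starRingEnd ℂ) = g * C⁻¹ := by
        rw [Matrix.map_mul]
        congr 1
        · rw [hCdef]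
          ext a b
          simp [Matrix.map_apply]
        · rw [← hCinv]
      rw [← hBmap]
      simp [Matrix.map_apply]
    have Eqbar : (3 : ℂ) • (1 : Matrix (Fin 4) (Fin 4) ℂ)
        = (starRingEnd ℂ) τ • (g * C⁻¹) - (g * C⁻¹) * (g * C⁻¹) := by
      set B1 : Matrix (Fin 4) (Fin 4) ℂ := C * g⁻¹ with hB1
      set B2 : Matrix (Fin 4) (Fin 4) ℂ := g * C⁻¹ with hB2
      ext i j
      have e0 := congrArg (starRingEnd ℂ) (congrArg (fun M => M i j) Eq1)
      simp only [Matrix.smul_apply, Matrix.sub_apply, Matrix.mul_apply,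
        smul_eq_mul, map_sub, map_mul, map_sum, Matrix.one_apply, apply_ite,
        map_one, map_zero, map_ofNat] at e0 ⊢
      simp only [hmapB'] at e0
      exact e0
    have e1' : (C * g⁻¹) * (C * g⁻¹) = τ • (C * g⁻¹) - (3:ℂ) • 1 := by
      rw [Eq1]
      abel
    have e2' : (g * C⁻¹) * (g * C⁻¹) = (starRingEnd ℂ) τ • (g * C⁻¹) - (3:ℂ) • 1 := by
      rw [Eqbar]
      abel
    have bigl : (C * g⁻¹) * ((g * C⁻¹) * (g * C⁻¹)) * (C * g⁻¹) = 1 := by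
      rw [← mul_assoc (C * g⁻¹) (g * C⁻¹) (g * C⁻¹),
        mul_assoc ((C * g⁻¹) * (g * C⁻¹)) (g * C⁻¹) (C * g⁻¹), hBB1, hBB2, one_mul]
    have bigr : (C * g⁻¹) * ((g * C⁻¹) * (g * C⁻¹)) * (C * g⁻¹)
        = ((starRingEnd ℂ) τ - 3 * τ) • (C * g⁻¹) + (9:ℂ) • 1 := by
      calc (C * g⁻¹) * ((g * C⁻¹) * (g * C⁻¹)) * (C * g⁻¹)
          = (C * g⁻¹) * ((starRingEnd ℂ) τ • (g * C⁻¹) - (3:ℂ) • 1) * (C * g⁻¹) := by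
            rw [e2']
        _ = ((starRingEnd ℂ) τ • ((C * g⁻¹) * (g * C⁻¹))
            - (3:ℂ) • ((C * g⁻¹) * 1)) * (C * g⁻¹) := by
            rw [Matrix.mul_sub, mul_smul_comm, mul_smul_comm]
        _ = ((starRingEnd ℂ) τ • (1 : Matrix (Fin 4) (Fin 4) ℂ)
            - (3:ℂ) • (C * g⁻¹)) * (C * g⁻¹) := by rw [hBB1, mul_one]
        _ = (starRingEnd ℂ) τ • ((1 : Matrix (Fin 4) (Fin 4) ℂ) * (C * g⁻¹))
            - (3:ℂ) • ((C * g⁻¹) * (C * g⁻¹)) := by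
            rw [Matrix.sub_mul, smul_mul_assoc, smul_mul_assoc]
        _ = (starRingEnd ℂ) τ • (C * g⁻¹)
            - (3:ℂ) • (τ • (C * g⁻¹) - (3:ℂ) • 1) := by rw [one_mul, e1']
        _ = ((starRingEnd ℂ) τ - 3 * τ) • (C * g⁻¹) + (9:ℂ) • 1 := by module
    have key : ((starRingEnd ℂ) τ - 3 * τ) • (C * g⁻¹)
        = (-8:ℂ) • (1 : Matrix (Fin 4) (Fin 4) ℂ) := by
      have h9 : ((starRingEnd ℂ) τ - 3 * τ) • (C * g⁻¹) + (9:ℂ) • 1 = 1 := by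
        rw [← bigr]; exact bigl
      have h10 : ((starRingEnd ℂ) τ - 3 * τ) • (C * g⁻¹)
          = (1 : Matrix (Fin 4) (Fin 4) ℂ) - (9:ℂ) • 1 := eq_sub_of_add_eq h9
      rw [h10]
      module
    by_cases hδ : (starRingEnd ℂ) τ - 3 * τ = 0
    · exfalso
      have hkey00 := congrArg (fun M => M 0 0) key
      rw [hδ] at hkey00
      simp [Matrix.smul_apply, Matrix.one_apply] at hkey00
    · have hc : C * g⁻¹ = (((starRingEnd ℂ) τ - 3 * τ)⁻¹ * (-8)) • (1 : Matrix (Fin 4) (Fin 4) ℂ) := by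
        calc C * g⁻¹
            = (((starRingEnd ℂ) τ - 3 * τ)⁻¹ * ((starRingEnd ℂ) τ - 3 * τ)) • (C * g⁻¹) := by
              rw [inv_mul_cancel₀ hδ, one_smul]
          _ = ((starRingEnd ℂ) τ - 3 * τ)⁻¹ • (((starRingEnd ℂ) τ - 3 * τ) • (C * g⁻¹)) := by
              rw [smul_smul]
          _ = ((starRingEnd ℂ) τ - 3 * τ)⁻¹ • ((-8:ℂ) • (1 : Matrix (Fin 4) (Fin 4) ℂ)) := by
              rw [key]
          _ = _ := by rw [smul_smul]
      set k : ℂ := ((starRingEnd ℂ) τ - 3 * τ)⁻¹ * (-8) with hkdef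
      have hτ4 : τ = 4 * k := by
        rw [hτdef, hc]
        simp [Matrix.trace_smul, Matrix.trace_one]
        ring
      have hBBc := e1'
      rw [hc, hτ4] at hBBc
      have hscal : k * k = 4 * k * k - 3 := by
        have h00 := congrArg (fun M => M 0 0) hBBc
        simp [Matrix.mul_apply, Matrix.smul_apply, Matrix.sub_apply,
          Matrix.one_apply, Finset.mul_sum, apply_ite] at h00
        linear_combination h00
      have hk2 : (k - 1) * (k + 1) = 0 := by linear_combination (-1/3 : ℂ) * hscal
      have hCgen : C = k • g := by
        calc C = C * (g⁻¹ * g) := by rw [hg2, mul_one]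
          _ = (C * g⁻¹) * g := by rw [mul_assoc]
          _ = (k • (1 : Matrix (Fin 4) (Fin 4) ℂ)) * g := by rw [hc]
          _ = k • g := by rw [Matrix.smul_mul, one_mul]
      rcases mul_eq_zero.mp hk2 with h1 | h1
      · have hkeq : k = 1 := by
          have := sub_eq_zero.mp h1
          exact this
        have him : ∀ p q, (g p q).im = 0 := by
          intro p q
          have hcg : (starRingEnd ℂ) (g p q) = g p q := by
            rw [← hCapp, hCgen, hkeq]
            simp
          exact Complex.conj_eq_iff_im.mp hcg
        intro a b c' d
        simp [him]
      · have hkeq : k = -1 := eq_neg_of_add_eq_zero_left h1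
        have hre : ∀ p q, (g p q).re = 0 := by
          intro p q
          have hcg : (starRingEnd ℂ) (g p q) = -(g p q) := by
            rw [← hCapp, hCgen, hkeq]
            simp
          have h3 := congrArg Complex.re hcg
          simp only [Complex.conj_re, Complex.neg_re] at h3
          linarith
        intro a b c' d
        simp [hre]
  · -- easy direction
    intro hcross a b c d
    have e1 := hcross a b c d
    have e2 := hcross b a d c
    rw [hs b d, hs c a, hs b c, hs d a] at e2
    simp only [Complex.sub_im, Complex.mul_im]
    linarith [e1, e2]
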